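/- Let P, Q ∈ B be points of infinite order. Then the following are equivalent: (i) for almost every v ∈ V there exist coprime integers x, y and a torsion point T ∈ B_tors (all possibly depending on v) such that x²P + y²Q = T mod v; (ii) there exist coprime integers x, y and a torsion point T ∈ B_tors such that x²P + y²Q = T in B. -/

import Mathlib

section Aux


-- a number ≡ 3 mod 4 has a prime factor ≡ 3 mod 4
lemma exists_prime_three_mod_four : ∀ n : ℕ, n % 4 = 3 → ∃ q : ℕ, q.Prime ∧ q % 4 = 3 ∧ q ∣ n := by
  intro n
  induction n using Nat.strong_induction_on with
  | _ n ih =>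
    intro hn
    have hn1 : n ≠ 1 := by omega
    have hn0 : n ≠ 0 := by omega
    have hp := Nat.minFac_prime hn1
    set p := n.minFac with hp'
    have hdvd : p ∣ n := Nat.minFac_dvd n
    have hp2 : p % 2 = 1 := by
      rcases hp.eq_two_or_odd with h | h
      · exfalso
        obtain ⟨m, hm⟩ := hdvd
        rw [h] at hm
        omega
      · exact h
    by_cases h3 : p % 4 = 3
    · exact ⟨p, hp, h3, hdvd⟩
    · have h1 : p % 4 = 1 := by omega
      obtain ⟨m, hm⟩ := hdvd
      have hm4 : m % 4 = 3 := by
        have h5 : n % 4 = (p % 4) * (m % 4) % 4 := by rw [hm, Nat.mul_mod]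
        rw [h1, one_mul] at h5
        omega
      have hmlt : m < n := by
        have hp1 : 2 ≤ p := hp.two_le
        have hm0 : m ≠ 0 := by rintro rfl; omega
        nlinarith [Nat.one_le_iff_ne_zero.mpr hm0]
      obtain ⟨q, hq, hq3, hqm⟩ := ih m hmlt hm4
      exact ⟨q, hq, hq3, hqm.trans ⟨p, by rw [hm, mul_comm]⟩⟩

lemma nat_sq_of_even_factorization {n : ℕ} (hn : n ≠ 0)
    (h : ∀ p, Even (n.factorization p)) : IsSquare n := by
  refine ⟨n.factorization.prod fun p e => p ^ (e / 2), ?_⟩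
  conv_lhs => rw [← Nat.factorization_prod_pow_eq_self hn]
  rw [Finsupp.prod, Finsupp.prod, ← Finset.prod_mul_distrib]
  apply Finset.prod_congr rfl
  intro p _
  rw [← pow_add]
  congr 1
  obtain ⟨k, hk⟩ := h p
  omega


lemma obstr_val {l : ℕ} (hl : l.Prime) :
    ∀ e : ℕ, Odd e → ∀ a b x y : ℤ, ¬(l:ℤ) ∣ a → ¬(l:ℤ) ∣ b → IsCoprime x y →
      ¬ (l:ℤ)^(e+1) ∣ (a * y^2 - (l:ℤ)^e * b * x^2) := by
  have hlZ : Prime (l:ℤ) := Int.prime_iff_natAbs_prime.mpr (by simpa using hl)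
  have hl0 : (l:ℤ) ≠ 0 := hlZ.ne_zero
  intro e
  induction e using Nat.strong_induction_on with
  | _ e ih =>
    intro he a b x y ha hb hxy H
    have he1 : 1 ≤ e := he.pos
    have h1 : (l:ℤ) ∣ a * y^2 := by
      have hd : (l:ℤ) ∣ (a*y^2 - (l:ℤ)^e*b*x^2) :=
        dvd_trans (dvd_pow_self _ (by omega : e+1 ≠ 0)) H
      have h2 : (l:ℤ) ∣ (l:ℤ)^e*b*x^2 :=
        ((dvd_pow_self (l:ℤ) (by omega : e ≠ 0)).mul_right b).mul_right _
      have := dvd_add hd h2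
      simpa using this
    have hy : (l:ℤ) ∣ y := by
      rcases hlZ.dvd_mul.mp h1 with h | h
      · exact absurd h ha
      · exact hlZ.dvd_of_dvd_pow h
    obtain ⟨y1, rfl⟩ := hy
    have hx : ¬ (l:ℤ) ∣ x := by
      intro hx
      exact hlZ.not_unit (hxy.isUnit_of_dvd' hx ⟨y1, rfl⟩)
    by_cases he2 : e = 1
    · subst he2
      have h3 : (l:ℤ)^2 ∣ (l:ℤ) * (b*x^2) := by
        have := dvd_sub (Dvd.intro _ rfl : (l:ℤ)^2 ∣ (l:ℤ)^2*(a*y1^2)) H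
        convert this using 1
        rfl
        ring
      have h4 : (l:ℤ) ∣ b*x^2 := by
        rwa [pow_two, mul_dvd_mul_iff_left hl0] at h3
      rcases hlZ.dvd_mul.mp h4 with h | h
      · exact hb h
      · exact hx (hlZ.dvd_of_dvd_pow h)
    · have he3 : 3 ≤ e := by rcases he with ⟨k, hk⟩; omega
      have hodd : Odd (e-2) := by rcases he with ⟨k, hk⟩; exact ⟨k-1, by omega⟩
      have hxy1 : IsCoprime x y1 := IsCoprime.of_mul_right_right hxy
      have hsplit : a*((l:ℤ)*y1)^2 - (l:ℤ)^e*b*x^2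
          = (l:ℤ)^2 * (a*y1^2 - (l:ℤ)^(e-2)*b*x^2) := by
        have h5 : (l:ℤ)^e = (l:ℤ)^2 * (l:ℤ)^(e-2) := by
          rw [← pow_add]; congr 1; omega
        rw [h5]; ring
      have hpow : (l:ℤ)^(e+1) = (l:ℤ)^2 * (l:ℤ)^(e-2+1) := by
        rw [← pow_add]; congr 1; omega
      rw [hsplit, hpow] at H
      exact ih (e-2) (by omega) hodd a b x y1 ha hb hxy1
        ((mul_dvd_mul_iff_left (pow_ne_zero 2 hl0)).mp H)

lemma obstr_neg {l : ℕ} (hl : l.Prime) (hl3 : l % 4 = 3) (u w x y : ℤ)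
    (hu : ¬(l:ℤ) ∣ u) (hw : ¬(l:ℤ) ∣ w) (hxy : IsCoprime x y) :
    ¬ (l:ℤ) ∣ (u^2*y^2 + w^2*x^2) := by
  intro H
  haveI : Fact l.Prime := ⟨hl⟩
  have hlZ : Prime (l:ℤ) := Int.prime_iff_natAbs_prime.mpr (by simpa using hl)
  have hZ : ((u^2*y^2 + w^2*x^2 : ℤ) : ZMod l) = 0 := by
    rw [ZMod.intCast_zmod_eq_zero_iff_dvd]; exact_mod_cast H
  push_cast at hZ
  set A := (u : ZMod l) * (y : ZMod l) with hA'
  set Bz := (w : ZMod l) * (x : ZMod l) with hB'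
  have hAB : A^2 = -Bz^2 := by
    rw [hA', hB']; ring_nf; linear_combination hZ
  by_cases hB : Bz = 0
  · have hx : (l:ℤ) ∣ x := by
      rcases mul_eq_zero.mp hB with h | h
      · exact absurd ((ZMod.intCast_zmod_eq_zero_iff_dvd _ _).mp h) hw
      · exact (ZMod.intCast_zmod_eq_zero_iff_dvd _ _).mp h
    have hA0 : A = 0 := by
      have : A^2 = 0 := by rw [hAB, hB]; ring
      exact pow_eq_zero_iff (n := 2) (by norm_num) |>.mp this
    have hy : (l:ℤ) ∣ y := by
      rcases mul_eq_zero.mp hA0 with h | h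
      · exact absurd ((ZMod.intCast_zmod_eq_zero_iff_dvd _ _).mp h) hu
      · exact (ZMod.intCast_zmod_eq_zero_iff_dvd _ _).mp h
    exact hlZ.not_unit (hxy.isUnit_of_dvd' hx hy)
  · have hsq : IsSquare (-1 : ZMod l) := by
      refine ⟨A * Bz⁻¹, ?_⟩
      have hB2 : Bz * Bz ≠ 0 := mul_ne_zero hB hB
      field_simp
      linear_combination -hAB
    rw [ZMod.exists_sq_eq_neg_one_iff] at hsq
    exact hsq (by omega)


lemma side_decomp {l : ℕ} (hl : l.Prime) {a : ℤ} (ha0 : a ≠ 0) :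
    ∃ a' : ℤ, a = (l:ℤ)^(a.natAbs.factorization l) * a' ∧ ¬ (l:ℤ) ∣ a' := by
  set e := a.natAbs.factorization l with he
  set a'' := a.natAbs / l^e with ha''
  have hdecomp : l^e * a'' = a.natAbs := Nat.ordProj_mul_ordCompl_eq_self a.natAbs l
  have hnd : ¬ l ∣ a'' := Nat.not_dvd_ordCompl hl (Int.natAbs_ne_zero.mpr ha0)
  have hndZ : ¬ (l:ℤ) ∣ (a'' : ℤ) := by
    intro h
    exact hnd (Int.natCast_dvd_natCast.mp h)
  rcases Int.natAbs_eq a with h | h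
  · refine ⟨(a'' : ℤ), ?_, hndZ⟩
    rw [h, ← hdecomp]; push_cast; ring
  · refine ⟨-(a'' : ℤ), ?_, by rwa [dvd_neg]⟩
    rw [h, ← hdecomp]; push_cast; ring

set_option maxHeartbeats 1000000 in
/-- Hasse–Minkowski for rank-2 quadratic forms on Mordell–Weil type groups.
`B` is an abelian group with finite torsion, `r v : B →+ Bv v` a family of
reduction maps into finite abelian groups indexed by an infinite set `V`,
satisfying Assumptions (1) and (2). -/
theorem stmt_0
    {V : Type*} [Infinite V]
    {B : Type*} [AddCommGroup B]
    (Bv : V → Type*) [∀ v, AddCommGroup (Bv v)] [∀ v, Finite (Bv v)]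
    (r : ∀ v : V, B →+ Bv v)
    (htors : {T : B | IsOfFinAddOrder T}.Finite)
    (h1 : ∀ l : ℕ, l.Prime → ∀ (m : ℕ) (Pts : Fin m → B), LinearIndependent ℤ Pts →
      ∀ k : Fin m → ℕ,
        {v : V | ∀ i : Fin m,
          l ^ (k i) ∣ addOrderOf (r v (Pts i)) ∧
          ¬ l ^ (k i + 1) ∣ addOrderOf (r v (Pts i))}.Infinite)
    (h2 : {v : V | ¬ Set.InjOn (r v) {T : B | IsOfFinAddOrder T}}.Finite)
    (P Q : B) (hP : ¬ IsOfFinAddOrder P) (hQ : ¬ IsOfFinAddOrder Q) :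
    {v : V | ¬ ∃ (x y : ℤ) (T : B), IsCoprime x y ∧ IsOfFinAddOrder T ∧
        r v (x ^ 2 • P + y ^ 2 • Q) = r v T}.Finite
      ↔
    ∃ (x y : ℤ) (T : B), IsCoprime x y ∧ IsOfFinAddOrder T ∧
        x ^ 2 • P + y ^ 2 • Q = T := by
  classical
  -- torsion exponent
  set t : ℕ := ∏ T ∈ htors.toFinset, addOrderOf T with ht
  have ht0 : t ≠ 0 := by
    rw [ht, Finset.prod_ne_zero_iff]
    intro T hT
    have hT' : IsOfFinAddOrder T := by simpa using (Set.Finite.mem_toFinset htors).mp hT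
    exact hT'.addOrderOf_pos.ne'
  have htkill : ∀ T : B, IsOfFinAddOrder T → (t:ℤ) • T = 0 := by
    intro T hT
    have hd : addOrderOf T ∣ t := Finset.dvd_prod_of_mem _ ((Set.Finite.mem_toFinset htors).mpr hT)
    rw [natCast_zsmul]
    exact addOrderOf_dvd_iff_nsmul_eq_zero.mp hd
  have tor_of_zsmul : ∀ (n : ℤ) (X : B), n ≠ 0 → n • X = 0 → IsOfFinAddOrder X := by
    intro n X hn hnX
    rw [isOfFinAddOrder_iff_nsmul_eq_zero]
    refine ⟨n.natAbs, Int.natAbs_pos.mpr hn, ?_⟩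
    have h : ((n.natAbs : ℤ)) • X = 0 := by
      rcases Int.natAbs_eq n with h | h
      · rw [← h]; exact hnX
      · rw [show ((n.natAbs:ℤ)) = -n by omega, neg_smul, hnX, neg_zero]
    rwa [natCast_zsmul] at h
  -- key local computation
  have hkey : ∀ (v : V) (x y : ℤ) (T : B), IsOfFinAddOrder T →
      r v (x^2 • P + y^2 • Q) = r v T →
      x^2 • (r v ((t:ℤ) • P)) + y^2 • (r v ((t:ℤ) • Q)) = 0 := by
    intro v x y T hT hEq
    have h0 : r v ((t:ℤ) • (x^2 • P + y^2 • Q)) = 0 := by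
      rw [map_zsmul, hEq, ← map_zsmul, htkill T hT, map_zero]
    rw [show (t:ℤ) • (x^2 • P + y^2 • Q) = x^2 • ((t:ℤ) • P) + y^2 • ((t:ℤ) • Q) by
        rw [smul_add, smul_comm ((t:ℤ)) (x^2), smul_comm ((t:ℤ)) (y^2)]] at h0
    simp only [map_add, map_zsmul] at h0 ⊢
    exact h0
  constructor
  · intro hfin
    by_cases hLI : LinearIndependent ℤ ![P, Q]
    · exfalso
      -- Case A: P, Q linearly independent: derive infinitude of the bad set
      have hLI' : LinearIndependent ℤ ![(t:ℤ) • P, (t:ℤ) • Q] := by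
        rw [Fintype.linearIndependent_iff] at hLI ⊢
        intro g hg i
        have htZ : (t:ℤ) ≠ 0 := by exact_mod_cast ht0
        have := hLI (fun i => g i * t) ?_ i
        · rcases mul_eq_zero.mp this with h | h
          · exact h
          · exact absurd h htZ
        · rw [Fin.sum_univ_two] at hg ⊢
          simp only [Matrix.cons_val_zero, Matrix.cons_val_one, Matrix.head_cons] at hg ⊢
          rw [mul_smul, mul_smul]
          exact hg
      have hinf := h1 2 Nat.prime_two 2 ![(t:ℤ) • P, (t:ℤ) • Q] hLI' ![1, 2]
      refine (hinf.mono ?_) hfin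
      intro v hv
      simp only [Set.mem_setOf_eq] at hv ⊢
      rintro ⟨x, y, T, hxy, hT, hEq⟩
      have hv0 := hv 0
      have hv1 := hv 1
      simp only [Matrix.cons_val_zero, Matrix.cons_val_one, Matrix.head_cons] at hv0 hv1
      set g1 := r v ((t:ℤ) • P) with hg1
      set g2 := r v ((t:ℤ) • Q) with hg2
      set n1 := addOrderOf g1 with hn1
      set n2 := addOrderOf g2 with hn2
      have key := hkey v x y T hT hEq
      have hn10 : n1 ≠ 0 := (addOrderOf_pos g1).ne'
      have hn20 : n2 ≠ 0 := (addOrderOf_pos g2).ne'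
      -- n1 = 2 * m1 with m1 odd; n2 = 4 * m2 with m2 odd
      obtain ⟨m1, hm1⟩ : 2 ∣ n1 := by simpa using hv0.1
      have hm1odd : ¬ 2 ∣ m1 := by
        intro h
        exact hv0.2 (by rw [hm1]; norm_num; omega)
      obtain ⟨m2, hm2⟩ : 4 ∣ n2 := by simpa using hv1.1
      have hm2odd : ¬ 2 ∣ m2 := by
        intro h
        exact hv1.2 (by rw [hm2]; norm_num; omega)
      have hm10 : m1 ≠ 0 := by rintro rfl; omega
      have hm20 : m2 ≠ 0 := by rintro rfl; omega
      have hM10 : (m1:ℤ) ≠ 0 := by exact_mod_cast hm10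
      have hM20 : (m2:ℤ) ≠ 0 := by exact_mod_cast hm20
      have hM1odd : ¬ (2:ℤ) ∣ (m1:ℤ) := by exact_mod_cast hm1odd
      have hM2odd : ¬ (2:ℤ) ∣ (m2:ℤ) := by exact_mod_cast hm2odd
      have hn1Z : (n1 : ℤ) = 2 * (m1:ℤ) := by exact_mod_cast hm1
      have hn2Z : (n2 : ℤ) = 4 * (m2:ℤ) := by exact_mod_cast hm2
      -- auxiliary: scaling key by c
      have hscale : ∀ c : ℤ, (c * x^2) • g1 + (c * y^2) • g2 = 0 := by
        intro c
        have := congrArg (fun z => c • z) key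
        simpa only [smul_add, smul_smul, smul_zero] using this
      -- Step 1: y is even
      have hyE : (2:ℤ) ∣ y := by
        have e1 : ((2 * (m1:ℤ) * (m2:ℤ)) * x^2) • g1 = 0 := by
          apply addOrderOf_dvd_iff_zsmul_eq_zero.mp
          rw [hn1Z]
          exact ⟨(m2:ℤ) * x^2, by ring⟩
        have e2 : ((2 * (m1:ℤ) * (m2:ℤ)) * y^2) • g2 = 0 := by
          have := hscale (2 * (m1:ℤ) * (m2:ℤ))
          rw [e1, zero_add] at this
          exact this
        have e3 : (n2 : ℤ) ∣ (2 * (m1:ℤ) * (m2:ℤ)) * y^2 := addOrderOf_dvd_iff_zsmul_eq_zero.mpr e2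
        rw [hn2Z] at e3
        have e4 : (2:ℤ) ∣ (m1:ℤ) * y^2 := by
          have e5 : (2 * (m2:ℤ)) * 2 ∣ (2 * (m2:ℤ)) * ((m1:ℤ) * y^2) := by
            convert e3 using 1 <;> ring
          exact (mul_dvd_mul_iff_left (by exact mul_ne_zero two_ne_zero hM20)).mp e5
        rcases (Int.prime_two.dvd_mul).mp e4 with h | h
        · exact absurd h hM1odd
        · exact Int.prime_two.dvd_of_dvd_pow h
      have hxO : ¬ (2:ℤ) ∣ x := by
        intro hx
        obtain ⟨u0, w0, huw⟩ := hxy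
        have : (2:ℤ) ∣ 1 := by
          rw [← huw]
          exact dvd_add (hx.mul_left u0) (hyE.mul_left w0)
        norm_num at this
      -- Step 2: contradiction
      obtain ⟨y1, rfl⟩ := hyE
      have f1 : (((m1:ℤ) * (m2:ℤ)) * (2*y1)^2) • g2 = 0 := by
        apply addOrderOf_dvd_iff_zsmul_eq_zero.mp
        rw [hn2Z]
        exact ⟨(m1:ℤ) * y1^2, by ring⟩
      have f2 : (((m1:ℤ) * (m2:ℤ)) * x^2) • g1 = 0 := by
        have := hscale ((m1:ℤ) * (m2:ℤ))
        rw [f1, add_zero] at this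
        exact this
      have f3 : (n1 : ℤ) ∣ ((m1:ℤ) * (m2:ℤ)) * x^2 := addOrderOf_dvd_iff_zsmul_eq_zero.mpr f2
      rw [hn1Z] at f3
      have f4 : (2:ℤ) ∣ (m2:ℤ) * x^2 := by
        have f5 : (m1:ℤ) * 2 ∣ (m1:ℤ) * ((m2:ℤ) * x^2) := by
          convert f3 using 1 <;> ring
        exact (mul_dvd_mul_iff_left hM10).mp f5
      rcases (Int.prime_two.dvd_mul).mp f4 with h | h
      · exact absurd h hM2odd
      · exact hxO (Int.prime_two.dvd_of_dvd_pow h)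
    · -- Case B: P, Q linearly dependent
      rw [Fintype.not_linearIndependent_iff] at hLI
      obtain ⟨g, hgsum, i0, hi0⟩ := hLI
      have hrel : g 0 • P + g 1 • Q = 0 := by
        rw [Fin.sum_univ_two] at hgsum
        simpa using hgsum
      have hc0 : g 0 ≠ 0 := by
        intro h
        have hd : g 1 ≠ 0 := by
          fin_cases i0
          · exact absurd h hi0
          · exact hi0
        rw [h, zero_smul, zero_add] at hrel
        exact hQ (tor_of_zsmul _ _ hd hrel)
      have hd0 : g 1 ≠ 0 := by
        intro h
        rw [h, zero_smul, add_zero] at hrel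
        exact hP (tor_of_zsmul _ _ hc0 hrel)
      set G : ℕ := Int.gcd (g 0) (g 1) with hG
      have hGpos : 0 < G := Int.gcd_pos_of_ne_zero_left _ hc0
      set a : ℤ := g 0 / (G:ℤ) with ha
      set b : ℤ := g 1 / (G:ℤ) with hb
      have hGa : (G:ℤ) * a = g 0 := Int.mul_ediv_cancel' (Int.gcd_dvd_left _ _)
      have hGb : (G:ℤ) * b = g 1 := Int.mul_ediv_cancel' (Int.gcd_dvd_right _ _)
      have hab : IsCoprime a b := by
        rw [Int.isCoprime_iff_gcd_eq_one, ha, hb]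
        exact Int.gcd_div_gcd_div_gcd hGpos
      have ha0 : a ≠ 0 := by intro h; apply hc0; rw [← hGa, h, mul_zero]
      have hb0 : b ≠ 0 := by intro h; apply hd0; rw [← hGb, h, mul_zero]
      set R := a • P + b • Q with hR
      have hGR : (G:ℤ) • R = 0 := by
        rw [hR, smul_add, smul_smul, smul_smul, hGa, hGb, hrel]
      have hRtor : IsOfFinAddOrder R :=
        tor_of_zsmul _ _ (by exact_mod_cast hGpos.ne') hGR
      set P' := (t:ℤ) • P with hP'
      set Q' := (t:ℤ) • Q with hQ'
      have hP'Q' : a • P' + b • Q' = 0 := by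
        have h5 : a • P' + b • Q' = (t:ℤ) • R := by
          rw [hP', hQ', hR]; module
        rw [h5, htkill R hRtor]
      obtain ⟨u, w, huw⟩ := id hab
      set S := u • Q' - w • P' with hS
      have hbQ' : b • Q' = -(a • P') := eq_neg_of_add_eq_zero_right hP'Q'
      have haP' : a • P' = -(b • Q') := eq_neg_of_add_eq_zero_left hP'Q'
      have hbS : b • S = -P' := by
        have e1 : b • S = u • (b • Q') - (b*w) • P' := by rw [hS]; module
        rw [e1, hbQ']
        have e2 : u • -(a • P') - (b*w) • P' = (-(u*a + w*b)) • P' := by module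
        rw [e2, huw]
        module
      have haS : a • S = Q' := by
        have e1 : a • S = (a*u) • Q' - w • (a • P') := by rw [hS]; module
        rw [e1, haP']
        have e2 : (a*u) • Q' - w • -(b • Q') = (u*a + w*b) • Q' := by module
        rw [e2, huw, one_smul]
      have hP'tor : ¬ IsOfFinAddOrder P' := by
        intro h
        obtain ⟨n, hn, hnP'⟩ := isOfFinAddOrder_iff_nsmul_eq_zero.mp h
        apply hP
        apply tor_of_zsmul ((n:ℤ) * (t:ℤ)) P
        · exact mul_ne_zero (by exact_mod_cast hn.ne') (by exact_mod_cast ht0)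
        · rw [mul_smul, ← hP', natCast_zsmul, hnP']
      have hStor : ¬ IsOfFinAddOrder S := by
        intro h
        obtain ⟨n, hn, hnS⟩ := isOfFinAddOrder_iff_nsmul_eq_zero.mp h
        apply hP'tor
        have h6 : IsOfFinAddOrder (-P') := by
          rw [← hbS, isOfFinAddOrder_iff_nsmul_eq_zero]
          exact ⟨n, hn, by rw [smul_comm, hnS, smul_zero]⟩
        simpa using h6.neg
      have hLIS : LinearIndependent ℤ ![S] := by
        rw [Fintype.linearIndependent_iff]
        intro gc hgc i
        fin_cases i
        by_contra hne
        refine hStor (tor_of_zsmul (gc 0) S hne ?_)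
        simpa [Fin.sum_univ_one] using hgc
      -- dichotomy on whether a*b is a perfect square
      by_cases hSq : ∃ c0 : ℤ, a * b = c0^2
      · obtain ⟨c0, hc0'⟩ := hSq
        obtain ⟨e, he⟩ := Int.sq_of_isCoprime hab hc0'
        obtain ⟨f, hf⟩ := Int.sq_of_isCoprime hab.symm (by rw [mul_comm]; exact hc0')
        have he0 : e ≠ 0 := by
          rintro rfl
          rcases he with he | he <;> simp at he <;> exact ha0 he
        have hf0 : f ≠ 0 := by
          rintro rfl
          rcases hf with hf | hf <;> simp at hf <;> exact hb0 hf
        have hef2 : (e*f)^2 ≠ 0 := pow_ne_zero _ (mul_ne_zero he0 hf0)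
        rcases he with he | he <;> rcases hf with hf | hf
        · refine ⟨e, f, R, ?_, hRtor, ?_⟩
          · have h7 : IsCoprime (e^2) (f^2) := by rw [← he, ← hf]; exact hab
            exact (IsCoprime.pow_left_iff two_pos).mp ((IsCoprime.pow_right_iff two_pos).mp h7)
          · rw [hR, ← he, ← hf]
        · exfalso
          have h7 : c0^2 = -((e*f)^2) := by rw [← hc0', he, hf]; ring
          have h8 : (e*f)^2 = 0 := by linarith [sq_nonneg c0, sq_nonneg (e*f)]
          exact hef2 h8
        · exfalso
          have h7 : c0^2 = -((e*f)^2) := by rw [← hc0', he, hf]; ring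
          have h8 : (e*f)^2 = 0 := by linarith [sq_nonneg c0, sq_nonneg (e*f)]
          exact hef2 h8
        · refine ⟨e, f, -R, ?_, hRtor.neg, ?_⟩
          · have h7 : IsCoprime (e^2) (f^2) := by
              rw [show e^2 = -a by rw [he]; ring, show f^2 = -b by rw [hf]; ring]
              exact hab.neg_left.neg_right
            exact (IsCoprime.pow_left_iff two_pos).mp ((IsCoprime.pow_right_iff two_pos).mp h7)
          · rw [show (e^2 : ℤ) = -a by rw [he]; ring, show (f^2 : ℤ) = -b by rw [hf]; ring, hR]
            module
      · exfalso
        -- produce a local obstruction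
        have hobstr : ∃ (l K : ℕ), l.Prime ∧
            ∀ x y : ℤ, IsCoprime x y → ¬ (l:ℤ)^K ∣ (a*y^2 - b*x^2) := by
          by_cases hval : ∃ l : ℕ, l.Prime ∧ Odd ((a*b).natAbs.factorization l)
          · obtain ⟨l, hl, hodd⟩ := hval
            have hlZ : Prime (l:ℤ) := Int.prime_iff_natAbs_prime.mpr (by simpa using hl)
            have haN : a.natAbs ≠ 0 := Int.natAbs_ne_zero.mpr ha0
            have hbN : b.natAbs ≠ 0 := Int.natAbs_ne_zero.mpr hb0
            have hfacsplit : (a*b).natAbs.factorization l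
                = a.natAbs.factorization l + b.natAbs.factorization l := by
              rw [Int.natAbs_mul, Nat.factorization_mul haN hbN]; simp
            obtain ⟨a', haa, hla'⟩ := side_decomp hl ha0
            obtain ⟨b', hbb, hlb'⟩ := side_decomp hl hb0
            have hnotboth : ¬ ((l:ℤ) ∣ a ∧ (l:ℤ) ∣ b) := by
              rintro ⟨h1', h2'⟩
              exact hlZ.not_unit (hab.isUnit_of_dvd' h1' h2')
            by_cases hzero : a.natAbs.factorization l = 0
            · -- valuation sits on b
              have heodd : Odd (b.natAbs.factorization l) := by
                rwa [hfacsplit, hzero, zero_add] at hodd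
              have hla : ¬ (l:ℤ) ∣ a := by
                rw [haa, hzero, pow_zero, one_mul]; exact hla'
              set eb := b.natAbs.factorization l with heb
              refine ⟨l, eb + 1, hl, ?_⟩
              intro x y hxy H
              rw [hbb] at H
              exact obstr_val hl eb heodd a b' x y hla hlb' hxy H
            · -- valuation sits on a
              have hza : 0 < a.natAbs.factorization l := Nat.pos_of_ne_zero hzero
              have hlaa : (l:ℤ) ∣ a := by
                rw [haa]
                exact (dvd_pow_self (l:ℤ) hzero).mul_right a'
              have hzb : b.natAbs.factorization l = 0 := by
                by_contra hzb
                apply hnotboth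
                refine ⟨hlaa, ?_⟩
                rw [hbb]
                exact (dvd_pow_self (l:ℤ) hzb).mul_right b'
              have heodd : Odd (a.natAbs.factorization l) := by
                rwa [hfacsplit, hzb, add_zero] at hodd
              have hlb : ¬ (l:ℤ) ∣ b := by
                rw [hbb, hzb, pow_zero, one_mul]; exact hlb'
              set ea := a.natAbs.factorization l with hea
              refine ⟨l, ea + 1, hl, ?_⟩
              intro x y hxy H
              have H' : (l:ℤ)^(ea + 1) ∣ (b*x^2 - a*y^2) := by
                rw [show b*x^2 - a*y^2 = -(a*y^2 - b*x^2) by ring]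
                exact dvd_neg.mpr H
              rw [haa] at H'
              exact obstr_val hl ea heodd b a' y x hlb hla' hxy.symm H'
          · -- |a*b| is a perfect square, so a*b = -(square)
            have habN0 : (a*b).natAbs ≠ 0 := Int.natAbs_ne_zero.mpr (mul_ne_zero ha0 hb0)
            have hSqN : IsSquare (a*b).natAbs := by
              apply nat_sq_of_even_factorization habN0
              intro p
              by_cases hp : p.Prime
              · rcases Nat.even_or_odd ((a*b).natAbs.factorization p) with h | h
                · exact h
                · exact absurd ⟨p, hp, h⟩ hval
              · rw [Nat.factorization_eq_zero_of_not_prime _ hp]; exact Even.zero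
            obtain ⟨s, hs⟩ := hSqN
            have habneg : a * b = -((s:ℤ)^2) := by
              rcases Int.natAbs_eq (a*b) with h | h
              · exfalso; exact hSq ⟨(s:ℤ), by rw [h, hs]; push_cast; ring⟩
              · rw [h, hs]; push_cast; ring
            obtain ⟨u', hu'⟩ := Int.sq_of_isCoprime hab.neg_right
              (show a * (-b) = (s:ℤ)^2 by rw [mul_neg, habneg, neg_neg])
            obtain ⟨w', hw'⟩ := Int.sq_of_isCoprime hab.neg_right.symm
              (show (-b) * a = (s:ℤ)^2 by rw [mul_comm, mul_neg, habneg, neg_neg])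
            have hu0 : u' ≠ 0 := by
              rintro rfl
              rcases hu' with h | h <;> simp at h <;> exact ha0 h
            have hw0 : w' ≠ 0 := by
              rintro rfl
              rcases hw' with h | h <;> simp at h <;> exact hb0 h
            have hk1 : 1 ≤ (u'*w').natAbs :=
              Nat.one_le_iff_ne_zero.mpr (Int.natAbs_ne_zero.mpr (mul_ne_zero hu0 hw0))
            have hk2 : 1 ≤ (u'*w').natAbs^2 := Nat.one_le_pow _ _ hk1
            obtain ⟨q, hq, hq3, hqd⟩ :=
              exists_prime_three_mod_four (4 * (u'*w').natAbs^2 - 1) (by omega)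
            have hqnd : ¬ q ∣ (u'*w').natAbs := by
              intro h
              have h4 : q ∣ 4 * (u'*w').natAbs^2 :=
                Dvd.dvd.mul_left (h.trans (dvd_pow_self _ two_ne_zero)) 4
              have h5 : q ∣ 1 := by
                have h6 := Nat.dvd_sub h4 hqd
                rwa [show 4*(u'*w').natAbs^2 - (4*(u'*w').natAbs^2 - 1) = 1 by omega] at h6
              exact hq.one_lt.ne' (Nat.dvd_one.mp h5)
            have hqZ : ¬ (q:ℤ) ∣ (u'*w') := by
              intro h
              apply hqnd
              have h7 := Int.natAbs_dvd_natAbs.mpr h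
              simpa using h7
            have hqu : ¬ (q:ℤ) ∣ u' := fun h => hqZ (h.mul_right w')
            have hqw : ¬ (q:ℤ) ∣ w' := fun h => hqZ (h.mul_left u')
            refine ⟨q, 1, hq, ?_⟩
            intro x y hxy H
            rw [pow_one] at H
            rcases hu' with hu | hu <;> rcases hw' with hw | hw
            · apply obstr_neg hq hq3 u' w' x y hqu hqw hxy
              rw [show u'^2*y^2 + w'^2*x^2 = a*y^2 - b*x^2 by
                rw [hu, show b = -w'^2 by linarith]; ring]
              exact H
            · exact absurd ⟨u'*w', by rw [hu, show b = w'^2 by linarith]; ring⟩ hSq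
            · exact absurd ⟨u'*w', by rw [show a = -u'^2 from hu, show b = -w'^2 by linarith]; ring⟩ hSq
            · apply obstr_neg hq hq3 u' w' x y hqu hqw hxy
              rw [show u'^2*y^2 + w'^2*x^2 = -(a*y^2 - b*x^2) by
                rw [show a = -u'^2 from hu, show b = w'^2 by linarith]; ring]
              exact dvd_neg.mpr H
        obtain ⟨l, K, hl, hObs⟩ := hobstr
        have hinf := h1 l hl 1 ![S] hLIS ![K]
        refine (hinf.mono ?_) hfin
        intro v hv
        simp only [Set.mem_setOf_eq] at hv ⊢
        rintro ⟨x, y, T, hxy, hT, hEq⟩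
        have key : x^2 • (r v P') + y^2 • (r v Q') = 0 := hkey v x y T hT hEq
        have hv0 := hv 0
        simp only [Matrix.cons_val_zero, Matrix.cons_val_fin_one] at hv0
        have hP'S : (-b) • S = P' := by rw [neg_smul, hbS, neg_neg]
        have hrS : (a*y^2 - b*x^2) • (r v S) = 0 := by
          have h5 : x^2 • (r v P') + y^2 • (r v Q') = (a*y^2 - b*x^2) • (r v S) := by
            rw [← hP'S, ← haS, map_zsmul, map_zsmul, smul_smul, smul_smul, ← add_smul]
            congr 1
            ring
          rw [← h5]; exact key
        have hdvd : ((addOrderOf (r v S) : ℤ)) ∣ (a*y^2 - b*x^2) :=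
          addOrderOf_dvd_iff_zsmul_eq_zero.mpr hrS
        have hlK : (l:ℤ)^K ∣ (a*y^2 - b*x^2) := by
          refine dvd_trans ?_ hdvd
          exact_mod_cast hv0.1
        exact hObs x y hxy hlK
  · rintro ⟨x, y, T, hxy, hT, hEq⟩
    apply Set.Finite.subset Set.finite_empty
    intro v hv
    exact (hv ⟨x, y, T, hxy, hT, by rw [hEq]⟩).elim

end Aux
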